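/- Between any two ipomsets there is at most one isomorphism. -/

import Mathlib

/-- The data of an ipomset over alphabet `A`: a finite carrier of events (taken
among the natural numbers), a precedence order `lt`, an event order `ev`, source
and target interfaces `S`, `T` and a labeling `lab`.  Only the restriction of the
data to the carrier is relevant. -/
structure PreIpomset (A : Type) where
  carrier : Set ℕ
  lt : ℕ → ℕ → Prop
  ev : ℕ → ℕ → Prop
  S : Set ℕ
  T : Set ℕ
  lab : ℕ → A

namespace PreIpomset

variable {A : Type}

/-- The axioms of an ipomset: finiteness, interfaces inside the carrier, `lt` and
`ev` strict partial orders, any two distinct events comparable by `lt` or `ev`,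
sources `lt`-minimal and targets `lt`-maximal. -/
def IsIpomset (P : PreIpomset A) : Prop :=
  P.carrier.Finite ∧ P.S ⊆ P.carrier ∧ P.T ⊆ P.carrier ∧
  (∀ x, ¬ P.lt x x) ∧
  (∀ x ∈ P.carrier, ∀ y ∈ P.carrier, ∀ z ∈ P.carrier,
    P.lt x y → P.lt y z → P.lt x z) ∧
  (∀ x, ¬ P.ev x x) ∧
  (∀ x ∈ P.carrier, ∀ y ∈ P.carrier, ∀ z ∈ P.carrier,
    P.ev x y → P.ev y z → P.ev x z) ∧
  (∀ x ∈ P.carrier, ∀ y ∈ P.carrier, x ≠ y →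
    P.lt x y ∨ P.lt y x ∨ P.ev x y ∨ P.ev y x) ∧
  (∀ x ∈ P.S, ∀ y ∈ P.carrier, ¬ P.lt y x) ∧
  (∀ x ∈ P.T, ∀ y ∈ P.carrier, ¬ P.lt x y)

/-- An ipomset is interval if its precedence order admits an interval
representation by real intervals. -/
def IsInterval (P : PreIpomset A) : Prop :=
  ∃ f g : ℕ → ℝ, (∀ x ∈ P.carrier, f x ≤ g x) ∧
    ∀ x ∈ P.carrier, ∀ y ∈ P.carrier, (P.lt x y ↔ g x < f y)

/-- `f` is a subsumption witnessing `P ⊑ Q`: a bijection respecting interfaces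
and labels, reflecting precedence and preserving essential event order. -/
def Subsumption (f : ℕ → ℕ) (P Q : PreIpomset A) : Prop :=
  Set.BijOn f P.carrier Q.carrier ∧
  f '' P.S = Q.S ∧ f '' P.T = Q.T ∧
  (∀ x ∈ P.carrier, Q.lab (f x) = P.lab x) ∧
  (∀ x ∈ P.carrier, ∀ y ∈ P.carrier, Q.lt (f x) (f y) → P.lt x y) ∧
  (∀ x ∈ P.carrier, ∀ y ∈ P.carrier,
    ¬ P.lt x y → ¬ P.lt y x → P.ev x y → Q.ev (f x) (f y))

/-- `f` is an isomorphism of ipomsets `P → Q`. -/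
def Iso (f : ℕ → ℕ) (P Q : PreIpomset A) : Prop :=
  Set.BijOn f P.carrier Q.carrier ∧
  f '' P.S = Q.S ∧ f '' P.T = Q.T ∧
  (∀ x ∈ P.carrier, Q.lab (f x) = P.lab x) ∧
  (∀ x ∈ P.carrier, ∀ y ∈ P.carrier, (Q.lt (f x) (f y) ↔ P.lt x y)) ∧
  (∀ x ∈ P.carrier, ∀ y ∈ P.carrier,
    ¬ P.lt x y → ¬ P.lt y x → (P.ev x y ↔ Q.ev (f x) (f y)))

/-- The gluing `P*Q` is defined when the targets of `P` are the sources of `Q`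
as conclists (same events, same event order, same labels) and the two ipomsets
overlap exactly in this common interface. -/
def GlueDefined (P Q : PreIpomset A) : Prop :=
  P.T = Q.S ∧ P.carrier ∩ Q.carrier = P.T ∧
  (∀ x ∈ P.T, ∀ y ∈ P.T, (P.ev x y ↔ Q.ev x y)) ∧
  (∀ x ∈ P.T, P.lab x = Q.lab x)

open Classical in
/-- The gluing composition of ipomsets. -/
noncomputable def glue (P Q : PreIpomset A) : PreIpomset A where
  carrier := P.carrier ∪ Q.carrier
  lt x y := P.lt x y ∨ Q.lt x y ∨
    (x ∈ P.carrier \ P.T ∧ y ∈ Q.carrier \ Q.S)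
  ev := Relation.TransGen (fun x y => P.ev x y ∨ Q.ev x y)
  S := P.S
  T := Q.T
  lab x := if x ∈ P.carrier then P.lab x else Q.lab x

/-- A discrete ipomset: empty precedence order (hence total event order). -/
def IsDiscrete (P : PreIpomset A) : Prop :=
  IsIpomset P ∧ ∀ x ∈ P.carrier, ∀ y ∈ P.carrier, ¬ P.lt x y

/-- A starter: a discrete ipomset all of whose events are targets. -/
def IsStarter (P : PreIpomset A) : Prop := IsDiscrete P ∧ P.T = P.carrier

/-- A terminator: a discrete ipomset all of whose events are sources. -/
def IsTerminator (P : PreIpomset A) : Prop := IsDiscrete P ∧ P.S = P.carrier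

/-- An identity `id_U`: a discrete ipomset with `S = T = U`. -/
def IsIdentity (P : PreIpomset A) : Prop :=
  IsDiscrete P ∧ P.S = P.carrier ∧ P.T = P.carrier

/-- Gluing of a nonempty list of ipomsets, from the left. -/
noncomputable def glueList [Inhabited A] : List (PreIpomset A) → PreIpomset A
  | [] => ⟨∅, fun _ _ => False, fun _ _ => False, ∅, ∅, fun _ => default⟩
  | P :: l => l.foldl glue P

/-- All the successive gluings in a list of ipomsets are defined. -/
def ChainGlueDefined : List (PreIpomset A) → Prop
  | [] => True
  | [_] => True
  | P :: Q :: l => GlueDefined P Q ∧ ChainGlueDefined (glue P Q :: l)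
  termination_by l => l.length

end PreIpomset

/-- Any finite nonempty set admits a minimal element with respect to a
transitive irreflexive relation. -/
lemma exists_min_rel : ∀ (n : ℕ) (C : Set ℕ) (r : ℕ → ℕ → Prop),
    C.Finite → C.ncard ≤ n → C.Nonempty →
    (∀ x, ¬ r x x) →
    (∀ x ∈ C, ∀ y ∈ C, ∀ z ∈ C, r x y → r y z → r x z) →
    ∃ m ∈ C, ∀ y ∈ C, ¬ r y m := by
  intro n
  induction n with
  | zero =>
    intro C r hfin hcard hne _ _
    have := (Set.ncard_pos hfin).mpr hne
    omega
  | succ n ih =>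
    intro C r hfin hcard hne hirr htr
    obtain ⟨a, ha⟩ := hne
    by_cases hmin : ∀ y ∈ C, ¬ r y a
    · exact ⟨a, ha, hmin⟩
    · push_neg at hmin
      obtain ⟨b, hb, hrb⟩ := hmin
      have hSsub : {x ∈ C | r x a} ⊆ C := fun x hx => hx.1
      have hSfin : ({x ∈ C | r x a} : Set ℕ).Finite := hfin.subset hSsub
      have hcardS : ({x ∈ C | r x a} : Set ℕ).ncard ≤ n := by
        have h1 : {x ∈ C | r x a} ⊆ C \ {a} := fun x hx =>
          ⟨hx.1, by rintro rfl; exact hirr _ hx.2⟩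
        have h2 := Set.ncard_le_ncard h1 (hfin.diff (t := {a}))
        have h3 := Set.ncard_diff_singleton_lt_of_mem ha hfin
        omega
      obtain ⟨m, hm, hmmin⟩ := ih {x ∈ C | r x a} r hSfin hcardS ⟨b, hb, hrb⟩ hirr
        (fun x hx y hy z hz => htr x (hSsub hx) y (hSsub hy) z (hSsub hz))
      refine ⟨m, hSsub hm, fun y hy hry => ?_⟩
      exact hmmin y ⟨hy, htr y hy m (hSsub hm) a ha hry hm.2⟩ hry

/-- Key combinatorial lemma: two "isomorphisms" between structures in which any
two distinct elements are comparable by one of two strict partial orders must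
agree, since the element that is `ev`-minimal among `lt`-minimal elements is
unique and preserved; induct by removing it. -/
lemma key_unique : ∀ (n : ℕ) (C D : Set ℕ) (ltP evP ltQ evQ : ℕ → ℕ → Prop)
    (f g : ℕ → ℕ),
    C.Finite → C.ncard ≤ n →
    (∀ x, ¬ ltP x x) →
    (∀ x ∈ C, ∀ y ∈ C, ∀ z ∈ C, ltP x y → ltP y z → ltP x z) →
    (∀ x, ¬ evP x x) →
    (∀ x ∈ C, ∀ y ∈ C, ∀ z ∈ C, evP x y → evP y z → evP x z) →
    (∀ x ∈ C, ∀ y ∈ C, x ≠ y → ltP x y ∨ ltP y x ∨ evP x y ∨ evP y x) →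
    (∀ x, ¬ evQ x x) →
    (∀ x ∈ D, ∀ y ∈ D, ∀ z ∈ D, evQ x y → evQ y z → evQ x z) →
    (∀ x ∈ D, ∀ y ∈ D, x ≠ y → ltQ x y ∨ ltQ y x ∨ evQ x y ∨ evQ y x) →
    Set.BijOn f C D →
    (∀ x ∈ C, ∀ y ∈ C, (ltQ (f x) (f y) ↔ ltP x y)) →
    (∀ x ∈ C, ∀ y ∈ C, ¬ ltP x y → ¬ ltP y x → (evP x y ↔ evQ (f x) (f y))) →
    Set.BijOn g C D →
    (∀ x ∈ C, ∀ y ∈ C, (ltQ (g x) (g y) ↔ ltP x y)) →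
    (∀ x ∈ C, ∀ y ∈ C, ¬ ltP x y → ¬ ltP y x → (evP x y ↔ evQ (g x) (g y))) →
    ∀ x ∈ C, f x = g x := by
  intro n
  induction n with
  | zero =>
    intro C D ltP evP ltQ evQ f g hfin hcard _ _ _ _ _ _ _ _ _ _ _ _ _ _ x hx
    have := (Set.ncard_pos hfin).mpr ⟨x, hx⟩
    omega
  | succ n ih =>
    intro C D ltP evP ltQ evQ f g hfin hcard hltPirr hltPtr hevPirr hevPtr htotP
      hevQirr hevQtr htotQ hfb hflt hfev hgb hglt hgev x hx
    -- the set of lt-minimal elements of C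
    set M : Set ℕ := {x ∈ C | ∀ y ∈ C, ¬ ltP y x} with hM
    have hMsub : M ⊆ C := fun x hx => hx.1
    -- M is nonempty
    obtain ⟨m, hmC, hmmin⟩ := exists_min_rel (n + 1) C ltP hfin hcard ⟨x, hx⟩
      hltPirr hltPtr
    -- pick the ev-minimal element of M
    obtain ⟨x₀, hx₀M, hx₀min⟩ := exists_min_rel (n + 1) M evP (hfin.subset hMsub)
      (le_trans (Set.ncard_le_ncard hMsub hfin) hcard) ⟨m, hmC, hmmin⟩ hevPirr
      (fun a ha b hb c hc => hevPtr a (hMsub ha) b (hMsub hb) c (hMsub hc))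
    have hx₀C : x₀ ∈ C := hMsub hx₀M
    -- the corresponding property in D
    set Φ : ℕ → Prop := fun y => y ∈ D ∧ (∀ z ∈ D, ¬ ltQ z y) ∧
      (∀ z ∈ D, (∀ w ∈ D, ¬ ltQ w z) → ¬ evQ z y) with hΦ
    -- both f x₀ and g x₀ satisfy Φ
    have himg : ∀ h : ℕ → ℕ, Set.BijOn h C D →
        (∀ x ∈ C, ∀ y ∈ C, (ltQ (h x) (h y) ↔ ltP x y)) →
        (∀ x ∈ C, ∀ y ∈ C, ¬ ltP x y → ¬ ltP y x → (evP x y ↔ evQ (h x) (h y))) →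
        Φ (h x₀) := by
      intro h hb hlt hev
      refine ⟨hb.mapsTo hx₀C, ?_, ?_⟩
      · intro z hz hzlt
        obtain ⟨w, hw, rfl⟩ := hb.surjOn hz
        exact hx₀M.2 w hw ((hlt w hw x₀ hx₀C).mp hzlt)
      · intro z hz hzmin hzev
        obtain ⟨w, hw, rfl⟩ := hb.surjOn hz
        have hwM : w ∈ M := by
          refine ⟨hw, fun u hu hult => ?_⟩
          exact hzmin (h u) (hb.mapsTo hu) ((hlt u hu w hw).mpr hult)
        have h1 : ¬ ltP w x₀ := hx₀M.2 w hw
        have h2 : ¬ ltP x₀ w := hwM.2 x₀ hx₀C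
        exact hx₀min w hwM ((hev w hw x₀ hx₀C h1 h2).mpr hzev)
    have hfΦ : Φ (f x₀) := himg f hfb hflt hfev
    have hgΦ : Φ (g x₀) := himg g hgb hglt hgev
    -- Φ determines a unique element
    have huniq : f x₀ = g x₀ := by
      by_contra hne
      rcases htotQ _ hfΦ.1 _ hgΦ.1 hne with h | h | h | h
      · exact hgΦ.2.1 _ hfΦ.1 h
      · exact hfΦ.2.1 _ hgΦ.1 h
      · exact hgΦ.2.2 _ hfΦ.1 hfΦ.2.1 h
      · exact hfΦ.2.2 _ hgΦ.1 hgΦ.2.1 h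
    rcases eq_or_ne x x₀ with rfl | hxx₀
    · exact huniq
    -- remove x₀ and induct
    have hCsub : C \ {x₀} ⊆ C := Set.diff_subset
    have hDsub : D \ {f x₀} ⊆ D := Set.diff_subset
    have hcard' : (C \ {x₀}).ncard ≤ n := by
      have := Set.ncard_diff_singleton_lt_of_mem hx₀C hfin
      have := Set.ncard_le_ncard hCsub hfin
      omega
    have hbij : ∀ h : ℕ → ℕ, Set.BijOn h C D → h x₀ = f x₀ →
        Set.BijOn h (C \ {x₀}) (D \ {f x₀}) := by
      intro h hb he
      refine ⟨fun a ha => ⟨hb.mapsTo ha.1, ?_⟩, hb.injOn.mono hCsub, ?_⟩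
      · intro hmem
        apply ha.2
        have : h a = h x₀ := by
          rw [he]; exact hmem
        exact hb.injOn ha.1 hx₀C this
      · intro y hy
        obtain ⟨w, hw, rfl⟩ := hb.surjOn hy.1
        refine ⟨w, ⟨hw, fun hwx => ?_⟩, rfl⟩
        apply hy.2
        rw [Set.mem_singleton_iff.mp hwx, he]
        rfl
    exact ih (C \ {x₀}) (D \ {f x₀}) ltP evP ltQ evQ f g (hfin.subset hCsub)
      hcard' hltPirr
      (fun a ha b hb c hc => hltPtr a (hCsub ha) b (hCsub hb) c (hCsub hc))
      hevPirr
      (fun a ha b hb c hc => hevPtr a (hCsub ha) b (hCsub hb) c (hCsub hc))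
      (fun a ha b hb => htotP a (hCsub ha) b (hCsub hb))
      hevQirr
      (fun a ha b hb c hc => hevQtr a (hDsub ha) b (hDsub hb) c (hDsub hc))
      (fun a ha b hb => htotQ a (hDsub ha) b (hDsub hb))
      (hbij f hfb rfl)
      (fun a ha b hb => hflt a (hCsub ha) b (hCsub hb))
      (fun a ha b hb => hfev a (hCsub ha) b (hCsub hb))
      (hbij g hgb huniq.symm)
      (fun a ha b hb => hglt a (hCsub ha) b (hCsub hb))
      (fun a ha b hb => hgev a (hCsub ha) b (hCsub hb))
      x ⟨hx, hxx₀⟩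

open PreIpomset in
/-- Between any two ipomsets there is at most one isomorphism:
two isomorphisms `P → Q` agree on the carrier of `P`. -/
theorem stmt3 (A : Type) (P Q : PreIpomset A) (hP : PreIpomset.IsIpomset P)
    (hQ : PreIpomset.IsIpomset Q) (f g : ℕ → ℕ)
    (hf : PreIpomset.Iso f P Q) (hg : PreIpomset.Iso g P Q) :
    ∀ x ∈ P.carrier, f x = g x := by
  obtain ⟨hPfin, _, _, hPltirr, hPlttr, hPevirr, hPevtr, hPtot, _, _⟩ := hP
  obtain ⟨_, _, _, _, _, hQevirr, hQevtr, hQtot, _, _⟩ := hQ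
  obtain ⟨hfb, _, _, _, hflt, hfev⟩ := hf
  obtain ⟨hgb, _, _, _, hglt, hgev⟩ := hg
  exact key_unique P.carrier.ncard P.carrier Q.carrier P.lt P.ev Q.lt Q.ev f g
    hPfin le_rfl hPltirr hPlttr hPevirr hPevtr hPtot hQevirr hQevtr hQtot
    hfb hflt hfev hgb hglt hgev
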